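/- Let μ : ℝ^d → (0,∞) be continuously differentiable, M symmetric positive definite, and h ∈ ℝ. Then the leapfrog map Φ_h : ℝ^d × ℝ^d → ℝ^d × ℝ^d preserves Lebesgue measure (2d-dimensional volume): Φ_h is a measure-preserving bijection of ℝ^{2d} equipped with Lebesgue measure. -/

import Mathlib

open Matrix MeasureTheory

/-- Gradient of `log μ` in standard coordinates on `ℝ^d`. -/
noncomputable def gradLog {d : ℕ} (μ : (Fin d → ℝ) → ℝ) (θ : Fin d → ℝ) : Fin d → ℝ :=
  fun i => fderiv ℝ (fun x => Real.log (μ x)) θ (Pi.single i 1)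

/-- The leapfrog map with step size `h`, target `μ` and mass matrix `M`. -/
noncomputable def leapfrog {d : ℕ} (μ : (Fin d → ℝ) → ℝ) (M : Matrix (Fin d) (Fin d) ℝ)
    (h : ℝ) (z : (Fin d → ℝ) × (Fin d → ℝ)) : (Fin d → ℝ) × (Fin d → ℝ) :=
  let θ' := z.1 + M⁻¹.mulVec (h • z.2 + (h ^ 2 / 2) • gradLog μ z.1)
  (θ', z.2 + (h / 2) • (gradLog μ z.1 + gradLog μ θ'))

section Aux

variable {d : ℕ}

/-- A "kick" shear: add a function of the first coordinate to the second. -/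
def kick (g : (Fin d → ℝ) → (Fin d → ℝ)) (z : (Fin d → ℝ) × (Fin d → ℝ)) :
    (Fin d → ℝ) × (Fin d → ℝ) := (z.1, z.2 + g z.1)

/-- A "drift" shear: add a function of the second coordinate to the first. -/
def drift (g : (Fin d → ℝ) → (Fin d → ℝ)) (z : (Fin d → ℝ) × (Fin d → ℝ)) :
    (Fin d → ℝ) × (Fin d → ℝ) := (z.1 + g z.2, z.2)

lemma kick_measurePreserving (g : (Fin d → ℝ) → (Fin d → ℝ)) (hg : Continuous g) :
    MeasurePreserving (kick g) volume volume := by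
  rw [show (volume : Measure ((Fin d → ℝ) × (Fin d → ℝ))) = volume.prod volume from rfl]
  exact (MeasurePreserving.id volume).skew_product
    (g := fun x y => y + g x)
    (continuous_snd.add (hg.comp continuous_fst)).measurable
    (Filter.Eventually.of_forall fun x => (measurePreserving_add_right volume (g x)).map_eq)

lemma drift_measurePreserving (g : (Fin d → ℝ) → (Fin d → ℝ)) (hg : Continuous g) :
    MeasurePreserving (drift g) volume volume := by
  have hswap : MeasurePreserving (Prod.swap : (Fin d → ℝ) × (Fin d → ℝ) → _) volume volume := by
    rw [show (volume : Measure ((Fin d → ℝ) × (Fin d → ℝ))) = volume.prod volume from rfl]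
    exact Measure.measurePreserving_swap
  have : drift g = Prod.swap ∘ kick g ∘ Prod.swap := by
    funext z; simp [drift, kick, Prod.swap]
  rw [this]
  exact hswap.comp ((kick_measurePreserving g hg).comp hswap)

lemma kick_bijective (g : (Fin d → ℝ) → (Fin d → ℝ)) : Function.Bijective (kick g) := by
  rw [Function.bijective_iff_has_inverse]
  refine ⟨kick (fun x => - g x), fun z => ?_, fun z => ?_⟩ <;>
    simp [kick, add_assoc]

lemma drift_bijective (g : (Fin d → ℝ) → (Fin d → ℝ)) : Function.Bijective (drift g) := by
  rw [Function.bijective_iff_has_inverse]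
  refine ⟨drift (fun x => - g x), fun z => ?_, fun z => ?_⟩ <;>
    simp [drift, add_assoc]

lemma gradLog_continuous (μ : (Fin d → ℝ) → ℝ) (hμ : ContDiff ℝ 1 μ) (hμpos : ∀ θ, 0 < μ θ) :
    Continuous (gradLog μ) := by
  have hlog : ContDiff ℝ 1 (fun x => Real.log (μ x)) := by
    rw [contDiff_iff_contDiffAt] at hμ ⊢
    intro x
    exact (Real.contDiffAt_log.2 (hμpos x).ne').comp x (hμ x)
  have hfd : Continuous (fderiv ℝ (fun x => Real.log (μ x))) := hlog.continuous_fderiv one_ne_zero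
  exact continuous_pi fun i => hfd.clm_apply continuous_const

lemma leapfrog_eq (μ : (Fin d → ℝ) → ℝ) (M : Matrix (Fin d) (Fin d) ℝ) (h : ℝ) :
    leapfrog μ M h =
      kick ((h / 2) • gradLog μ) ∘ drift (fun ρ => M⁻¹.mulVec (h • ρ)) ∘
        kick ((h / 2) • gradLog μ) := by
  funext z
  obtain ⟨θ, ρ⟩ := z
  simp only [leapfrog, kick, drift, Function.comp_apply, Pi.smul_apply]
  have h1 : h • (ρ + (h / 2) • gradLog μ θ) = h • ρ + (h ^ 2 / 2) • gradLog μ θ := by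
    rw [smul_add, smul_smul]; ring_nf
  rw [h1, Prod.mk.injEq]
  exact ⟨rfl, by rw [smul_add]; abel⟩

end Aux

/-- The leapfrog map is a measure-preserving bijection of `ℝ^d × ℝ^d` equipped with
Lebesgue (volume) measure. -/
theorem leapfrog_measurePreserving (d : ℕ) (μ : (Fin d → ℝ) → ℝ)
    (hμ : ContDiff ℝ 1 μ) (hμpos : ∀ θ, 0 < μ θ)
    (M : Matrix (Fin d) (Fin d) ℝ) (hM : M.PosDef) (h : ℝ) :
    MeasurePreserving (leapfrog μ M h) volume volume ∧
    Function.Bijective (leapfrog μ M h) := by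
  have hg : Continuous ((h / 2) • gradLog μ) := by
    show Continuous fun x => (h / 2) • gradLog μ x
    exact (gradLog_continuous μ hμ hμpos).const_smul (h / 2)
  have hd : Continuous (fun ρ : Fin d → ℝ => M⁻¹.mulVec (h • ρ)) := by
    have : Continuous (fun ρ : Fin d → ℝ => M⁻¹.mulVec ρ) :=
      (Matrix.mulVecLin M⁻¹).continuous_of_finiteDimensional
    exact this.comp (continuous_const_smul h)
  rw [leapfrog_eq]
  constructor
  · exact (kick_measurePreserving _ hg).comp
      ((drift_measurePreserving _ hd).comp (kick_measurePreserving _ hg))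
  · exact (kick_bijective _).comp ((drift_bijective _).comp (kick_bijective _))
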